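/- In the Young–Fibonacci graph, every vertex of rank n (digit sum n) has out-degree (number of covers of it) exceeding its in-degree (number of elements it covers) by exactly 1. -/

import Mathlib

inductive YFDigit : Type
  | one : YFDigit
  | two : YFDigit
  deriving DecidableEq, Repr

abbrev YFWord := List YFDigit

namespace YFWord

/-- value of a digit -/
def digitVal : YFDigit → ℕ
  | .one => 1
  | .two => 2

/-- digit sum of a word -/
def dsum (v : YFWord) : ℕ := (v.map digitVal).sum

/-- number of 2's in a word -/
def twos (v : YFWord) : ℕ := v.count YFDigit.two

/-- longest common prefix of two lists -/
def commonPrefix : YFWord → YFWord → YFWord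
  | a :: x, b :: y => if a = b then a :: commonPrefix x y else []
  | _, _ => []

/-- longest common suffix -/
def lcs (x y : YFWord) : YFWord := (commonPrefix x.reverse y.reverse).reverse

/-- the prefix of `x` remaining after deleting the longest common suffix of `x` and `y` -/
def rem (x y : YFWord) : YFWord := x.take (x.length - (lcs x y).length)

/-- the Young–Fibonacci order: x ≤ y iff, after removing the longest common suffix,
the remaining prefix of `y` has at least as many 2's as the remaining prefix of `x` has digits -/
def yfLE (x y : YFWord) : Prop := (rem x y).length ≤ twos (rem y x)

/-- strict Young–Fibonacci order -/
def yfLT (x y : YFWord) : Prop := yfLE x y ∧ ¬ yfLE y x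

/-- `y` covers `x` in the Young–Fibonacci order -/
def covers (x y : YFWord) : Prop := yfLT x y ∧ ∀ z, ¬ (yfLT x z ∧ yfLT z y)

end YFWord

open YFWord

namespace YFWord

open List

lemma digit_cases (d : YFDigit) : d = .one ∨ d = .two := by cases d <;> simp

@[simp] lemma dsum_nil : dsum ([] : YFWord) = 0 := rfl
@[simp] lemma dsum_cons (d : YFDigit) (l : YFWord) :
    dsum (d :: l) = digitVal d + dsum l := by simp [dsum]
@[simp] lemma dsum_append (a b : YFWord) : dsum (a ++ b) = dsum a + dsum b := by simp [dsum]
@[simp] lemma twos_nil : twos ([] : YFWord) = 0 := rfl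
@[simp] lemma twos_append (a b : YFWord) : twos (a ++ b) = twos a + twos b :=
  List.count_append ..
lemma twos_le_length (v : YFWord) : twos v ≤ v.length := List.count_le_length ..
@[simp] lemma twos_cons_one (l : YFWord) : twos (.one :: l) = twos l := by
  simp [twos, List.count_cons]
@[simp] lemma twos_cons_two (l : YFWord) : twos (.two :: l) = twos l + 1 := by
  simp [twos, List.count_cons]
lemma dsum_eq_length_add_twos (v : YFWord) : dsum v = v.length + twos v := by
  induction v with
  | nil => rfl
  | cons d l ih => cases d <;> simp [digitVal, ih] <;> omega
@[simp] lemma twos_replicate (p : ℕ) : twos (List.replicate p YFDigit.two) = p := by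
  simp [twos, List.count_replicate]
@[simp] lemma dsum_replicate (p : ℕ) : dsum (List.replicate p YFDigit.two) = 2 * p := by
  rw [dsum_eq_length_add_twos]; simp; omega
lemma eq_replicate_of_twos_eq_length {v : YFWord} (h : twos v = v.length) :
    v = List.replicate v.length YFDigit.two := by
  refine List.eq_replicate_of_mem (fun b hb => ?_)
  rcases digit_cases b with rfl | rfl
  · exfalso
    have := (List.count_eq_length (a := YFDigit.two) (l := v)).mp h YFDigit.one hb
    simp at this
  · rfl
lemma ones_eq (v : YFWord) : v.count YFDigit.one = v.length - twos v := by
  induction v with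
  | nil => rfl
  | cons d l ih =>
      have := twos_le_length l
      cases d <;> simp [List.count_cons, ih] <;> omega

/-! ### commonPrefix lemmas -/

@[simp] lemma cp_nil_left (b : YFWord) : commonPrefix [] b = [] := by
  cases b <;> rfl
@[simp] lemma cp_nil_right (a : YFWord) : commonPrefix a [] = [] := by
  cases a <;> rfl
lemma cp_cons (a b : YFDigit) (x y : YFWord) :
    commonPrefix (a :: x) (b :: y) =
      if a = b then a :: commonPrefix x y else [] := rfl

lemma cp_comm (a b : YFWord) : commonPrefix a b = commonPrefix b a := by
  induction a generalizing b with
  | nil => simp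
  | cons ha ta ih =>
      cases b with
      | nil => simp
      | cons hb tb =>
          rw [cp_cons, cp_cons, ih]
          by_cases h : ha = hb
          · subst h; simp
          · rw [if_neg h, if_neg (Ne.symm h)]

lemma cp_prefix (a b : YFWord) : commonPrefix a b <+: a := by
  induction a generalizing b with
  | nil => simp
  | cons ha ta ih =>
      cases b with
      | nil => simp
      | cons hb tb =>
          rw [cp_cons]
          by_cases h : ha = hb
          · rw [if_pos h]; exact List.cons_prefix_cons.mpr ⟨rfl, ih tb⟩
          · simp [h]

lemma cp_append (c a b : YFWord) :
    commonPrefix (c ++ a) (c ++ b) = c ++ commonPrefix a b := by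
  induction c with
  | nil => simp
  | cons hc tc ih => simp [cp_cons, ih]

lemma cp_max (a b : YFWord) {d e : YFDigit}
    (hd : (a.drop (commonPrefix a b).length).head? = some d)
    (he : (b.drop (commonPrefix a b).length).head? = some e) : d ≠ e := by
  induction a generalizing b with
  | nil => simp at hd
  | cons ha ta ih =>
      cases b with
      | nil => simp at he
      | cons hb tb =>
          by_cases h : ha = hb
          · rw [cp_cons, if_pos h] at hd he
            simp only [List.length_cons, List.drop_succ_cons] at hd he
            exact ih tb hd he
          · rw [cp_cons, if_neg h] at hd he
            simp at hd he
            subst hd he; exact h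

end YFWord
namespace YFWord
open List

lemma lcs_comm (x y : YFWord) : lcs x y = lcs y x := by
  unfold lcs; rw [cp_comm]

lemma lcs_suffix (x y : YFWord) : lcs x y <:+ x := by
  rw [← List.reverse_prefix]
  unfold lcs
  rw [List.reverse_reverse]
  exact cp_prefix _ _

lemma lcs_length_le (x y : YFWord) : (lcs x y).length ≤ x.length :=
  (lcs_suffix x y).length_le

lemma rem_append_lcs (x y : YFWord) : rem x y ++ lcs x y = x := by
  obtain ⟨t, ht⟩ := lcs_suffix x y
  unfold rem
  obtain ⟨s, hs⟩ : ∃ s, s = lcs x y := ⟨_, rfl⟩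
  rw [← hs] at ht ⊢
  subst ht
  have h1 : (t ++ s).length - s.length = t.length := by simp
  rw [h1, List.take_left]

lemma lcs_append (A B C : YFWord) : lcs (A ++ C) (B ++ C) = lcs A B ++ C := by
  unfold lcs
  rw [List.reverse_append, List.reverse_append, cp_append, List.reverse_append,
    List.reverse_reverse]

lemma rem_append (A B C : YFWord) : rem (A ++ C) (B ++ C) = rem A B := by
  unfold rem
  rw [lcs_append]
  have h1 : (lcs A B).length ≤ A.length := lcs_length_le A B
  simp only [List.length_append]
  have h2 : A.length + C.length - ((lcs A B).length + C.length) = A.length - (lcs A B).length := by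
    omega
  rw [h2, List.take_append]
  have h3 : A.length - (lcs A B).length - A.length = 0 := by omega
  rw [h3]
  simp

lemma yfLE_append (A B C : YFWord) : yfLE (A ++ C) (B ++ C) ↔ yfLE A B := by
  unfold yfLE
  rw [rem_append, rem_append]

lemma lcs_nil_left (y : YFWord) : lcs [] y = [] := by simp [lcs]

lemma lcs_nil_of_getLast_ne {x y : YFWord} {c d : YFDigit}
    (hx : x.getLast? = some c) (hy : y.getLast? = some d) (h : c ≠ d) :
    lcs x y = [] := by
  rw [← List.head?_reverse] at hx hy
  unfold lcs
  cases hx' : x.reverse with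
  | nil => simp [hx'] 
  | cons a ta =>
      cases hy' : y.reverse with
      | nil => simp [hy']
      | cons b tb =>
          rw [hx'] at hx; rw [hy'] at hy
          simp at hx hy
          subst hx hy
          rw [cp_cons, if_neg h]
          rfl

lemma rem_of_lcs_nil {x y : YFWord} (h : lcs x y = []) : rem x y = x := by
  unfold rem
  rw [h]
  simp

lemma yfLE_iff_of_lcs_nil {x y : YFWord} (h : lcs x y = []) :
    yfLE x y ↔ x.length ≤ twos y := by
  unfold yfLE
  rw [rem_of_lcs_nil h, rem_of_lcs_nil (by rw [lcs_comm]; exact h)]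

lemma rem_reverse (x y : YFWord) :
    (rem x y).reverse = x.reverse.drop (lcs x y).length := by
  unfold rem
  rw [List.reverse_take]
  congr 1
  have := lcs_length_le x y
  omega

lemma lcs_length_eq_cp (x y : YFWord) :
    (lcs x y).length = (commonPrefix x.reverse y.reverse).length := by
  unfold lcs; simp

lemma rem_getLast_ne {x y : YFWord} {c d : YFDigit}
    (hc : (rem x y).getLast? = some c) (hd : (rem y x).getLast? = some d) : c ≠ d := by
  rw [← List.head?_reverse, rem_reverse, lcs_length_eq_cp] at hc hd
  rw [cp_comm y.reverse x.reverse] at hd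
  exact cp_max x.reverse y.reverse hc hd

lemma yfLE_nil (y : YFWord) : yfLE [] y := by
  unfold yfLE rem
  simp

lemma cp_self (a : YFWord) : commonPrefix a a = a := by
  induction a with
  | nil => simp
  | cons h t ih => rw [cp_cons]; simp [ih]

lemma lcs_self (x : YFWord) : lcs x x = x := by
  unfold lcs; rw [cp_self, List.reverse_reverse]

lemma yfLE_refl (x : YFWord) : yfLE x x := by
  unfold yfLE rem
  rw [lcs_self]
  simp

end YFWord
namespace YFWord
open List

/-- If `x` and `y` differ, then after removing the common suffix not both parts are empty,
and by definition of `yfLE` the strict rank inequality follows. -/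
lemma dsum_lt_of_yfLE_ne {x y : YFWord} (h : yfLE x y) (hne : x ≠ y) :
    dsum x < dsum y := by
  have hx := rem_append_lcs x y
  have hy := rem_append_lcs y x
  rw [lcs_comm y x] at hy
  set A := rem x y with hA
  set B := rem y x with hB
  set C := lcs x y with hC
  have hle : A.length ≤ twos B := h
  have h1 : dsum A = A.length + twos A := dsum_eq_length_add_twos A
  have h2 : dsum B = B.length + twos B := dsum_eq_length_add_twos B
  have h3 : twos A ≤ A.length := twos_le_length A
  have h4 : twos B ≤ B.length := twos_le_length B
  have hAB : A ≠ B := by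
    intro hab
    apply hne
    rw [← hx, ← hy, hab]
  have hlt : dsum A < dsum B := by
    rcases Nat.lt_or_ge (dsum A) (dsum B) with h' | h'
    · exact h'
    · exfalso
      have e1 : twos A = A.length ∧ twos B = B.length ∧ A.length = B.length := by omega
      have eA : A = List.replicate A.length YFDigit.two := eq_replicate_of_twos_eq_length e1.1
      have eB : B = List.replicate B.length YFDigit.two := eq_replicate_of_twos_eq_length e1.2.1
      apply hAB
      rw [eA, eB, e1.2.2]
  calc dsum x = dsum A + dsum C := by rw [← hx]; simp
    _ < dsum B + dsum C := by omega
    _ = dsum y := by rw [← hy]; simp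

lemma yfLE_antisymm {x y : YFWord} (h1 : yfLE x y) (h2 : yfLE y x) : x = y := by
  by_contra hne
  have a1 := dsum_lt_of_yfLE_ne h1 hne
  have a2 := dsum_lt_of_yfLE_ne h2 (Ne.symm hne)
  omega

lemma yfLT_iff {x y : YFWord} : yfLT x y ↔ yfLE x y ∧ x ≠ y := by
  constructor
  · rintro ⟨h1, h2⟩
    refine ⟨h1, ?_⟩
    rintro rfl
    exact h2 (yfLE_refl x)
  · rintro ⟨h1, h2⟩
    exact ⟨h1, fun h' => h2 (yfLE_antisymm h1 h')⟩

/-- Key monotonicity lemma: if `z` has at least `x.length` twos then `x ≤ z`. -/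
lemma yfLE_of_length_le_twos {x z : YFWord} (h : x.length ≤ twos z) : yfLE x z := by
  unfold yfLE
  have h1 : (rem x z).length ≤ x.length := by
    unfold rem; simp
  have hz := rem_append_lcs z x
  have h2 : twos z = twos (rem z x) + twos (lcs z x) := by
    conv_lhs => rw [← hz]
    simp
  have h3 : twos (lcs z x) ≤ (lcs z x).length := twos_le_length _
  have h4 : (lcs z x).length = (lcs x z).length := by rw [lcs_comm]
  have h5 : (rem x z).length = x.length - (lcs x z).length := by
    unfold rem
    rw [List.length_take]
    have := lcs_length_le x z
    omega
  have h6 : (lcs x z).length ≤ x.length := lcs_length_le x z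
  omega

lemma two_ne_one : (YFDigit.two : YFDigit) ≠ YFDigit.one := by simp

lemma getLast_replicate_two {p : ℕ} (hp : 1 ≤ p) :
    (List.replicate p YFDigit.two).getLast? = some YFDigit.two := by
  obtain ⟨q, rfl⟩ : ∃ q, p = q + 1 := ⟨p - 1, by omega⟩
  rw [List.replicate_succ']
  exact List.getLast?_concat

/-- `2^p ≤ 2^p 1` -/
lemma yfLE_rep_insert (p : ℕ) :
    yfLE (List.replicate p YFDigit.two) (List.replicate p YFDigit.two ++ [YFDigit.one]) := by
  rcases Nat.eq_zero_or_pos p with rfl | hp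
  · simpa using yfLE_nil [YFDigit.one]
  · have hnil : lcs (List.replicate p YFDigit.two)
        (List.replicate p YFDigit.two ++ [YFDigit.one]) = [] :=
      lcs_nil_of_getLast_ne (getLast_replicate_two hp) (List.getLast?_concat) two_ne_one
    rw [yfLE_iff_of_lcs_nil hnil]
    simp

/-- `2^p 1 ≤ 2^(p+1)` -/
lemma yfLE_rep_replace (p : ℕ) :
    yfLE (List.replicate p YFDigit.two ++ [YFDigit.one])
      (List.replicate (p + 1) YFDigit.two) := by
  have hnil : lcs (List.replicate p YFDigit.two ++ [YFDigit.one])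
      (List.replicate (p + 1) YFDigit.two) = [] :=
    lcs_nil_of_getLast_ne (List.getLast?_concat) (getLast_replicate_two (by omega))
      (Ne.symm two_ne_one)
  rw [yfLE_iff_of_lcs_nil hnil]
  simp

/-- shape 1 : `2^p C ≤ 2^p 1 C` -/
lemma yfLE_shape1 (p : ℕ) (C : YFWord) :
    yfLE (List.replicate p YFDigit.two ++ C)
      (List.replicate p YFDigit.two ++ YFDigit.one :: C) := by
  have h : List.replicate p YFDigit.two ++ YFDigit.one :: C
      = (List.replicate p YFDigit.two ++ [YFDigit.one]) ++ C := by simp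
  rw [h, yfLE_append]
  exact yfLE_rep_insert p

/-- shape 2 : `2^p 1 C ≤ 2^(p+1) C` -/
lemma yfLE_shape2 (p : ℕ) (C : YFWord) :
    yfLE (List.replicate p YFDigit.two ++ YFDigit.one :: C)
      (List.replicate (p + 1) YFDigit.two ++ C) := by
  have h : List.replicate p YFDigit.two ++ YFDigit.one :: C
      = (List.replicate p YFDigit.two ++ [YFDigit.one]) ++ C := by simp
  rw [h, yfLE_append]
  exact yfLE_rep_replace p

end YFWord
namespace YFWord
open List

lemma yfLT_of_yfLE_dsum_lt {x z : YFWord} (h : yfLE x z) (hd : dsum x < dsum z) :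
    yfLT x z :=
  yfLT_iff.mpr ⟨h, fun e => by subst e; omega⟩

lemma exists_leftmost_one {B : YFWord} (h : YFDigit.one ∈ B) :
    ∃ j Q, B = List.replicate j YFDigit.two ++ YFDigit.one :: Q := by
  induction B with
  | nil => simp at h
  | cons b l ih =>
      rcases digit_cases b with rfl | rfl
      · exact ⟨0, l, rfl⟩
      · have h' : YFDigit.one ∈ l := by simpa using h
        obtain ⟨j, Q, rfl⟩ := ih h'
        exact ⟨j + 1, Q, by rw [List.replicate_succ]; rfl⟩

lemma all_two_of_not_mem_one {B : YFWord} (h : YFDigit.one ∉ B) :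
    B = List.replicate B.length YFDigit.two := by
  refine List.eq_replicate_of_mem (fun b hb => ?_)
  rcases digit_cases b with rfl | rfl
  · exact absurd hb h
  · rfl

/-- existence of intermediate elements -/
lemma exists_mid {x y : YFWord} (h : yfLE x y) (hd : dsum x + 2 ≤ dsum y) :
    ∃ z, yfLT x z ∧ yfLT z y := by
  have hx := rem_append_lcs x y
  have hy := rem_append_lcs y x
  rw [lcs_comm y x] at hy
  set A := rem x y with hA
  set B := rem y x with hB
  set C := lcs x y with hC
  have hle : A.length ≤ twos B := h
  have hdx : dsum x = dsum A + dsum C := by rw [← hx]; simp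
  have hdy : dsum y = dsum B + dsum C := by rw [← hy]; simp
  have hdAB : dsum A + 2 ≤ dsum B := by omega
  obtain ⟨Z, hAZ, hZB, hd1, hd2⟩ :
      ∃ Z, yfLE A Z ∧ yfLE Z B ∧ dsum A < dsum Z ∧ dsum Z < dsum B := by
    by_cases hone : YFDigit.one ∈ B
    · obtain ⟨j, Q, hBj⟩ := exists_leftmost_one hone
      refine ⟨List.replicate j YFDigit.two ++ Q, ?_, ?_, ?_, ?_⟩
      · apply yfLE_of_length_le_twos
        have : twos (List.replicate j YFDigit.two ++ Q) = twos B := by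
          rw [hBj]; simp
        omega
      · rw [hBj]; exact yfLE_shape1 j Q
      · have : dsum B = dsum (List.replicate j YFDigit.two ++ Q) + 1 := by
          rw [hBj]; simp [digitVal]; omega
        omega
      · have : dsum B = dsum (List.replicate j YFDigit.two ++ Q) + 1 := by
          rw [hBj]; simp [digitVal]; omega
        omega
    · have hBr : B = List.replicate B.length YFDigit.two := all_two_of_not_mem_one hone
      set k := B.length with hk
      have hk1 : 1 ≤ k := by
        rcases Nat.eq_zero_or_pos k with h0 | h1
        · exfalso
          have : B = [] := List.length_eq_zero_iff.mp h0
          rw [this] at hdAB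
          simp at hdAB
        · exact h1
      have htB : twos B = k := by rw [hBr]; simp
      have hdB : dsum B = 2 * k := by rw [hBr]; simp
      refine ⟨List.replicate (k - 1) YFDigit.two ++ [YFDigit.one], ?_, ?_, ?_, ?_⟩
      · -- yfLE A Z
        rcases Nat.lt_or_ge A.length k with hlt | hge
        · apply yfLE_of_length_le_twos
          simp
          omega
        · -- A.length = k, so A ends in one
          have hAk : A.length = k := by omega
          have hAne : A ≠ [] := by
            intro h0
            rw [h0] at hAk
            simp at hAk
            omega
          rcases List.eq_nil_or_concat A with h0 | ⟨A', c, hA'⟩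
          · exact absurd h0 hAne
          · rw [List.concat_eq_append] at hA'
            have hlastA : A.getLast? = some c := by rw [hA']; exact List.getLast?_concat
            have hlastB : B.getLast? = some YFDigit.two := by
              rw [hBr]; exact getLast_replicate_two hk1
            have hc : c ≠ YFDigit.two := rem_getLast_ne hlastA hlastB
            have hc1 : c = YFDigit.one := by
              rcases digit_cases c with rfl | rfl
              · rfl
              · exact absurd rfl hc
            subst hc1
            rw [hA', yfLE_append]
            apply yfLE_of_length_le_twos
            have : A'.length = k - 1 := by
              have := congrArg List.length hA'
              simp at this
              omega
            simp [this]
      · -- yfLE Z B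
        have hnil : lcs (List.replicate (k - 1) YFDigit.two ++ [YFDigit.one]) B = [] := by
          apply lcs_nil_of_getLast_ne (List.getLast?_concat)
            (by rw [hBr]; exact getLast_replicate_two hk1)
          exact Ne.symm two_ne_one
        rw [yfLE_iff_of_lcs_nil hnil]
        simp
        omega
      · have : dsum (List.replicate (k - 1) YFDigit.two ++ [YFDigit.one]) = 2 * (k - 1) + 1 := by
          simp [digitVal]
        omega
      · have : dsum (List.replicate (k - 1) YFDigit.two ++ [YFDigit.one]) = 2 * (k - 1) + 1 := by
          simp [digitVal]
        omega
  refine ⟨Z ++ C, ?_, ?_⟩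
  · apply yfLT_of_yfLE_dsum_lt
    · rw [← hx, yfLE_append]
      exact hAZ
    · simp [hdx]
      omega
  · apply yfLT_of_yfLE_dsum_lt
    · rw [← hy, yfLE_append]
      exact hZB
    · simp [hdy]
      omega

/-- `covers` is equivalent to `yfLE` plus rank one more -/
lemma covers_iff {u y : YFWord} :
    covers u y ↔ yfLE u y ∧ dsum y = dsum u + 1 := by
  constructor
  · rintro ⟨hlt, hmid⟩
    have hle : yfLE u y := hlt.1
    have hne : u ≠ y := (yfLT_iff.mp hlt).2
    have h1 : dsum u < dsum y := dsum_lt_of_yfLE_ne hle hne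
    refine ⟨hle, ?_⟩
    by_contra hne2
    have h2 : dsum u + 2 ≤ dsum y := by omega
    obtain ⟨z, hz1, hz2⟩ := exists_mid hle h2
    exact hmid z ⟨hz1, hz2⟩
  · rintro ⟨hle, hd⟩
    refine ⟨yfLT_of_yfLE_dsum_lt hle (by omega), ?_⟩
    rintro z ⟨h1, h2⟩
    have d1 : dsum u < dsum z := dsum_lt_of_yfLE_ne h1.1 (yfLT_iff.mp h1).2
    have d2 : dsum z < dsum y := dsum_lt_of_yfLE_ne h2.1 (yfLT_iff.mp h2).2
    omega

end YFWord
namespace YFWord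
open List

lemma class_rank1 {x y : YFWord} (h : yfLE x y) (hd : dsum y = dsum x + 1) :
    (∃ p C, x = List.replicate p YFDigit.two ++ C ∧
        y = List.replicate p YFDigit.two ++ YFDigit.one :: C) ∨
    (∃ p C, x = List.replicate p YFDigit.two ++ YFDigit.one :: C ∧
        y = List.replicate (p + 1) YFDigit.two ++ C) := by
  have hx := rem_append_lcs x y
  have hy := rem_append_lcs y x
  rw [lcs_comm y x] at hy
  set A := rem x y with hA
  set B := rem y x with hB
  set C := lcs x y with hC
  have hle : A.length ≤ twos B := h
  have hdx : dsum x = dsum A + dsum C := by rw [← hx]; simp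
  have hdy : dsum y = dsum B + dsum C := by rw [← hy]; simp
  have hdAB : dsum B = dsum A + 1 := by omega
  have e1 : dsum A = A.length + twos A := dsum_eq_length_add_twos A
  have e2 : dsum B = B.length + twos B := dsum_eq_length_add_twos B
  have e3 : twos A ≤ A.length := twos_le_length A
  have e4 : twos B ≤ B.length := twos_le_length B
  by_cases hcase : twos A = A.length
  · -- A = 2^p, B = 2^p 1
    left
    have hq : B.length = A.length + 1 ∧ twos B = A.length := by omega
    have hArep : A = List.replicate A.length YFDigit.two := eq_replicate_of_twos_eq_length hcase
    have hBne : B ≠ [] := by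
      intro h0; rw [h0] at hq; simp at hq
    rcases List.eq_nil_or_concat B with h0 | ⟨B', d, hB'⟩
    · exact absurd h0 hBne
    rw [List.concat_eq_append] at hB'
    have hd1 : d = YFDigit.one := by
      rcases digit_cases d with rfl | rfl
      · rfl
      · exfalso
        rcases Nat.eq_zero_or_pos A.length with h0 | hpos
        · -- twos B = 0 but B ends in two
          have : twos B = twos B' + 1 := by rw [hB']; simp
          omega
        · have hlastA : A.getLast? = some YFDigit.two := by
            rw [hArep]; exact getLast_replicate_two hpos
          have hlastB : B.getLast? = some YFDigit.two := by
            rw [hB']; exact List.getLast?_concat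
          exact rem_getLast_ne hlastA hlastB rfl
    subst hd1
    have hB'len : B'.length = A.length := by
      have := congrArg List.length hB'
      simp at this; omega
    have hB'twos : twos B' = B'.length := by
      have : twos B = twos B' := by rw [hB']; simp
      omega
    have hB'rep : B' = List.replicate B'.length YFDigit.two :=
      eq_replicate_of_twos_eq_length hB'twos
    refine ⟨A.length, C, ?_, ?_⟩
    · rw [← hx, ← hArep]
    · rw [← hy, hB', hB'rep, hB'len]
      simp
  · -- A = 2^(p-1) 1, B = 2^p
    right
    have hq : 1 ≤ A.length ∧ twos A = A.length - 1 ∧ B.length = A.length ∧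
        twos B = A.length := by omega
    have hBrep : B = List.replicate B.length YFDigit.two := by
      apply eq_replicate_of_twos_eq_length
      omega
    have hAne : A ≠ [] := by
      intro h0; rw [h0] at hq; simp at hq
    rcases List.eq_nil_or_concat A with h0 | ⟨A', c, hA'⟩
    · exact absurd h0 hAne
    rw [List.concat_eq_append] at hA'
    have hc1 : c = YFDigit.one := by
      rcases digit_cases c with rfl | rfl
      · rfl
      · exfalso
        have hlastA : A.getLast? = some YFDigit.two := by
          rw [hA']; exact List.getLast?_concat
        have hlastB : B.getLast? = some YFDigit.two := by
          rw [hBrep]; exact getLast_replicate_two (by omega)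
        exact rem_getLast_ne hlastA hlastB rfl
    subst hc1
    have hA'len : A'.length = A.length - 1 := by
      have := congrArg List.length hA'
      simp at this; omega
    have hA'twos : twos A' = A'.length := by
      have : twos A = twos A' := by rw [hA']; simp
      omega
    have hA'rep : A' = List.replicate A'.length YFDigit.two :=
      eq_replicate_of_twos_eq_length hA'twos
    refine ⟨A'.length, C, ?_, ?_⟩
    · rw [← hx, hA', hA'rep]
      simp
    · rw [← hy]
      congr 1
      rw [hBrep]
      congr 1
      omega

end YFWord
namespace YFWord
open List

/-- number of leading twos -/
def lead : YFWord → ℕ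
  | YFDigit.two :: l => lead l + 1
  | _ => 0

@[simp] lemma lead_nil : lead [] = 0 := rfl
@[simp] lemma lead_one_cons (l : YFWord) : lead (YFDigit.one :: l) = 0 := rfl
@[simp] lemma lead_two_cons (l : YFWord) : lead (YFDigit.two :: l) = lead l + 1 := rfl

lemma lead_rep_one (p : ℕ) (v : YFWord) :
    lead (List.replicate p YFDigit.two ++ YFDigit.one :: v) = p := by
  induction p with
  | zero => simp
  | succ q ih => rw [List.replicate_succ]; simp [ih]

lemma lead_ge (p : ℕ) (C : YFWord) :
    p ≤ lead (List.replicate p YFDigit.two ++ C) := by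
  induction p with
  | zero => simp
  | succ q ih => rw [List.replicate_succ]; simp; omega

lemma exists_decomp (u : YFWord) :
    u = List.replicate (lead u) YFDigit.two ∨
    ∃ v, u = List.replicate (lead u) YFDigit.two ++ YFDigit.one :: v := by
  induction u with
  | nil => left; rfl
  | cons d l ih =>
      rcases digit_cases d with rfl | rfl
      · right; exact ⟨l, rfl⟩
      · rcases ih with h | ⟨v, h⟩
        · left; rw [lead_two_cons, List.replicate_succ]
          exact congrArg _ h
        · right
          exact ⟨v, by rw [lead_two_cons, List.replicate_succ]; exact congrArg _ h⟩

lemma split_rep {p a : ℕ} {C : YFWord}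
    (h : List.replicate p YFDigit.two ++ C = List.replicate a YFDigit.two) :
    p ≤ a ∧ C = List.replicate (a - p) YFDigit.two := by
  have hp : p ≤ a := by
    have := congrArg List.length h
    simp at this
    omega
  constructor
  · exact hp
  · have h2 : List.replicate a YFDigit.two
        = List.replicate p YFDigit.two ++ List.replicate (a - p) YFDigit.two := by
      rw [← List.replicate_add]
      congr 1
      omega
    rw [h2] at h
    exact List.append_cancel_left h

lemma split_rep_one {p a : ℕ} {C v : YFWord}
    (h : List.replicate p YFDigit.two ++ C
        = List.replicate a YFDigit.two ++ YFDigit.one :: v) :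
    p ≤ a ∧ C = List.replicate (a - p) YFDigit.two ++ YFDigit.one :: v := by
  have hp : p ≤ a := by
    have h1 := lead_ge p C
    rw [h, lead_rep_one] at h1
    exact h1
  constructor
  · exact hp
  · have h2 : List.replicate a YFDigit.two ++ YFDigit.one :: v
        = List.replicate p YFDigit.two
          ++ (List.replicate (a - p) YFDigit.two ++ YFDigit.one :: v) := by
      rw [← List.append_assoc, ← List.replicate_add]
      congr 2
      omega
    rw [h2] at h
    exact List.append_cancel_left h

lemma split_one_one {p a : ℕ} {C v : YFWord}
    (h : List.replicate p YFDigit.two ++ YFDigit.one :: C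
        = List.replicate a YFDigit.two ++ YFDigit.one :: v) :
    p = a ∧ C = v := by
  have hp : p = a := by
    have h1 := congrArg lead h
    rw [lead_rep_one, lead_rep_one] at h1
    exact h1
  subst hp
  have h2 := List.append_cancel_left h
  simp at h2
  exact ⟨rfl, h2⟩

lemma one_ne_rep {p a : ℕ} {C : YFWord} :
    List.replicate p YFDigit.two ++ YFDigit.one :: C
      ≠ List.replicate a YFDigit.two := by
  intro h
  have := congrArg (List.count YFDigit.one) h
  simp [List.count_append, List.count_replicate, List.count_cons] at this

end YFWord
namespace YFWord
open List

lemma up_set_rep (a : ℕ) :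
    {y | covers (List.replicate a YFDigit.two) y}
      = (fun i => List.replicate i YFDigit.two ++ YFDigit.one ::
          List.replicate (a - i) YFDigit.two) '' Set.Iic a := by
  ext y
  simp only [Set.mem_setOf_eq, covers_iff, Set.mem_image, Set.mem_Iic]
  constructor
  · rintro ⟨hle, hd⟩
    rcases class_rank1 hle hd with ⟨p, C, hx, hy⟩ | ⟨p, C, hx, hy⟩
    · obtain ⟨hp, hC⟩ := split_rep hx.symm
      exact ⟨p, hp, by rw [hy, hC]⟩
    · exact absurd hx.symm one_ne_rep
  · rintro ⟨i, hi, rfl⟩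
    have hrep : List.replicate a YFDigit.two
        = List.replicate i YFDigit.two ++ List.replicate (a - i) YFDigit.two := by
      rw [← List.replicate_add]; congr 1; omega
    constructor
    · rw [hrep]; exact yfLE_shape1 i _
    · simp [digitVal]; omega

lemma down_set_rep (a : ℕ) :
    {w | covers w (List.replicate a YFDigit.two)}
      = (fun i => List.replicate i YFDigit.two ++ YFDigit.one ::
          List.replicate (a - 1 - i) YFDigit.two) '' Set.Iio a := by
  ext w
  simp only [Set.mem_setOf_eq, covers_iff, Set.mem_image, Set.mem_Iio]
  constructor
  · rintro ⟨hle, hd⟩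
    rcases class_rank1 hle hd with ⟨p, C, hw, hu2⟩ | ⟨p, C, hw, hu2⟩
    · exact absurd hu2.symm one_ne_rep
    · obtain ⟨hp, hC⟩ := split_rep hu2.symm
      refine ⟨p, by omega, ?_⟩
      rw [hw, hC]
      congr 3
      omega
  · rintro ⟨i, hi, rfl⟩
    have hrep : List.replicate a YFDigit.two
        = List.replicate (i + 1) YFDigit.two ++ List.replicate (a - 1 - i) YFDigit.two := by
      rw [← List.replicate_add]; congr 1; omega
    constructor
    · rw [hrep]; exact yfLE_shape2 i _
    · simp [digitVal]; omega

lemma up_set_one (a : ℕ) (v : YFWord) :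
    {y | covers (List.replicate a YFDigit.two ++ YFDigit.one :: v) y}
      = insert (List.replicate (a + 1) YFDigit.two ++ v)
          ((fun i => List.replicate i YFDigit.two ++ YFDigit.one ::
            (List.replicate (a - i) YFDigit.two ++ YFDigit.one :: v)) '' Set.Iic a) := by
  ext y
  simp only [Set.mem_setOf_eq, covers_iff, Set.mem_insert_iff, Set.mem_image, Set.mem_Iic]
  constructor
  · rintro ⟨hle, hd⟩
    rcases class_rank1 hle hd with ⟨p, C, hx, hy⟩ | ⟨p, C, hx, hy⟩
    · obtain ⟨hp, hC⟩ := split_rep_one hx.symm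
      exact Or.inr ⟨p, hp, by rw [hy, hC]⟩
    · obtain ⟨hp, hC⟩ := split_one_one hx.symm
      left
      rw [hy, hp, hC]
  · rintro (rfl | ⟨i, hi, rfl⟩)
    · refine ⟨yfLE_shape2 a v, ?_⟩
      simp [digitVal]; omega
    · have hrep : List.replicate a YFDigit.two ++ YFDigit.one :: v
          = List.replicate i YFDigit.two
            ++ (List.replicate (a - i) YFDigit.two ++ YFDigit.one :: v) := by
        rw [← List.append_assoc, ← List.replicate_add]
        congr 2
        omega
      refine ⟨by rw [hrep]; exact yfLE_shape1 i _, ?_⟩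
      simp [digitVal]; omega

lemma down_set_one (a : ℕ) (v : YFWord) :
    {w | covers w (List.replicate a YFDigit.two ++ YFDigit.one :: v)}
      = insert (List.replicate a YFDigit.two ++ v)
          ((fun i => List.replicate i YFDigit.two ++ YFDigit.one ::
            (List.replicate (a - 1 - i) YFDigit.two ++ YFDigit.one :: v)) '' Set.Iio a) := by
  ext w
  simp only [Set.mem_setOf_eq, covers_iff, Set.mem_insert_iff, Set.mem_image, Set.mem_Iio]
  constructor
  · rintro ⟨hle, hd⟩
    rcases class_rank1 hle hd with ⟨p, C, hw, hu2⟩ | ⟨p, C, hw, hu2⟩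
    · obtain ⟨hp, hC⟩ := split_one_one hu2.symm
      left
      rw [hw, hp, hC]
    · obtain ⟨hp, hC⟩ := split_rep_one hu2.symm
      refine Or.inr ⟨p, by omega, ?_⟩
      have h3 : a - (p + 1) = a - 1 - p := by omega
      rw [hw, hC, h3]
  · rintro (rfl | ⟨i, hi, rfl⟩)
    · refine ⟨yfLE_shape1 a v, ?_⟩
      simp [digitVal]; omega
    · have hrep : List.replicate a YFDigit.two ++ YFDigit.one :: v
          = List.replicate (i + 1) YFDigit.two
            ++ (List.replicate (a - 1 - i) YFDigit.two ++ YFDigit.one :: v) := by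
        rw [← List.append_assoc, ← List.replicate_add]
        congr 2
        omega
      refine ⟨by rw [hrep]; exact yfLE_shape2 i _, ?_⟩
      simp [digitVal]; omega

end YFWord


theorem yf_one_differential (n : ℕ) (u : YFWord) (hu : dsum u = n) :
    {y : YFWord | covers u y}.ncard = {w : YFWord | covers w u}.ncard + 1 := by
  clear hu
  rcases exists_decomp u with h | ⟨v, h⟩
  · obtain ⟨a, ha⟩ : ∃ a, a = lead u := ⟨_, rfl⟩
    rw [← ha] at h
    rw [h, up_set_rep a, down_set_rep a]
    have hinj1 : Set.InjOn (fun i => List.replicate i YFDigit.two ++ YFDigit.one ::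
        List.replicate (a - i) YFDigit.two) (Set.Iic a) := by
      intro i _ j _ hij
      have := congrArg lead hij
      simpa [lead_rep_one] using this
    have hinj2 : Set.InjOn (fun i => List.replicate i YFDigit.two ++ YFDigit.one ::
        List.replicate (a - 1 - i) YFDigit.two) (Set.Iio a) := by
      intro i _ j _ hij
      have := congrArg lead hij
      simpa [lead_rep_one] using this
    rw [Set.ncard_image_of_injOn hinj1, Set.ncard_image_of_injOn hinj2,
      ← Finset.coe_Iic, ← Finset.coe_Iio, Set.ncard_coe_finset, Set.ncard_coe_finset,
      Nat.card_Iic, Nat.card_Iio]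
  · obtain ⟨a, ha⟩ : ∃ a, a = lead u := ⟨_, rfl⟩
    rw [← ha] at h
    rw [h, up_set_one a v, down_set_one a v]
    have hinj1 : Set.InjOn (fun i => List.replicate i YFDigit.two ++ YFDigit.one ::
        (List.replicate (a - i) YFDigit.two ++ YFDigit.one :: v)) (Set.Iic a) := by
      intro i _ j _ hij
      have := congrArg lead hij
      simpa [lead_rep_one] using this
    have hinj2 : Set.InjOn (fun i => List.replicate i YFDigit.two ++ YFDigit.one ::
        (List.replicate (a - 1 - i) YFDigit.two ++ YFDigit.one :: v)) (Set.Iio a) := by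
      intro i _ j _ hij
      have := congrArg lead hij
      simpa [lead_rep_one] using this
    have hnot1 : List.replicate (a + 1) YFDigit.two ++ v ∉
        (fun i => List.replicate i YFDigit.two ++ YFDigit.one ::
          (List.replicate (a - i) YFDigit.two ++ YFDigit.one :: v)) '' Set.Iic a := by
      rintro ⟨i, hi, hfi⟩
      have h1 := congrArg lead hfi
      simp only [lead_rep_one] at h1
      have h2 := lead_ge (a + 1) v
      simp only [Set.mem_Iic] at hi
      omega
    have hnot2 : List.replicate a YFDigit.two ++ v ∉
        (fun i => List.replicate i YFDigit.two ++ YFDigit.one ::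
          (List.replicate (a - 1 - i) YFDigit.two ++ YFDigit.one :: v)) '' Set.Iio a := by
      rintro ⟨i, hi, hfi⟩
      have h1 := congrArg lead hfi
      simp only [lead_rep_one] at h1
      have h2 := lead_ge a v
      simp only [Set.mem_Iio] at hi
      omega
    rw [Set.ncard_insert_of_notMem hnot1 ((Set.finite_Iic a).image _),
      Set.ncard_insert_of_notMem hnot2 ((Set.finite_Iio a).image _),
      Set.ncard_image_of_injOn hinj1, Set.ncard_image_of_injOn hinj2,
      ← Finset.coe_Iic, ← Finset.coe_Iio, Set.ncard_coe_finset, Set.ncard_coe_finset,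
      Nat.card_Iic, Nat.card_Iio]
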